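/- For any function g : ℝ → ℝ integrable on [0, π/2], the change of variables ϑ = (π/4)φ + (π/4) gives (1/π) ∫_0^{π/2} g(ϑ) dϑ = (1/4) ∫_{−1}^{1} g( (π/4)φ + (π/4) ) dφ. In particular, for R a real Gaussian with mean μ_R, variance σ_R² > 0 and ς > 0, E[ Q( √(R²/(2ς)) ) ] = (1/4) ∫_{−1}^{1} √( 2ς sin²((π/4)φ + π/4) / (2ς sin²((π/4)φ + π/4) + σ_R²) ) · exp( −μ_R² / (4ς sin²((π/4)φ + π/4) + 2σ_R²) ) dφ. -/

import Mathlib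

open MeasureTheory ProbabilityTheory Real Set Filter

/-- The Gaussian tail function Q(x) = ∫_x^∞ (1/√(2π)) e^{-t²/2} dt. -/
noncomputable def gaussQ (x : ℝ) : ℝ :=
  ∫ t in Set.Ioi x, (1 / Real.sqrt (2*π)) * Real.exp (-t^2/2)

lemma radial_int (b : ℝ) : ∫ ρ in Ioi b, ρ * exp (-ρ^2/2) = exp (-b^2/2) := by
  have h := integral_Ioi_of_hasDerivAt_of_tendsto (f := fun ρ : ℝ => -exp (-ρ^2/2))
    (f' := fun ρ : ℝ => ρ * exp (-ρ^2/2)) (a := b) (m := 0) ?_ ?_ ?_ ?_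
  · simpa using h
  · exact (Continuous.continuousWithinAt (by continuity))
  · intro x _
    have : HasDerivAt (fun ρ : ℝ => -ρ^2/2) (-x) x := by
      have := ((hasDerivAt_pow 2 x).neg.div_const 2)
      simpa using this.congr_deriv (by ring)
    have := (this.exp).neg
    exact this.congr_deriv (by ring)
  · have : IntegrableOn (fun x : ℝ => x * exp (-(1/2 : ℝ) * x^2)) (Ioi b) :=
      (integrable_mul_exp_neg_mul_sq (by norm_num)).integrableOn
    refine this.congr_fun (fun x _ => by ring_nf) measurableSet_Ioi
  · have : Tendsto (fun ρ : ℝ => exp (-(1/2:ℝ) * ρ^2)) atTop (nhds 0) := by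
      have h1 : Tendsto (fun ρ : ℝ => (1/2:ℝ) * ρ^2) atTop atTop := by
        exact Tendsto.const_mul_atTop (by norm_num) (tendsto_pow_atTop (by norm_num))
      have h2 := tendsto_exp_neg_atTop_nhds_zero.comp h1
      convert h2 using 2 with ρ
      simp [Function.comp]
    have := this.neg
    simp only [neg_zero] at this
    refine this.congr (fun ρ => by ring_nf)

lemma gauss_total : ∫ s : ℝ, (1 / Real.sqrt (2*π)) * exp (-s^2/2) = 1 := by
  rw [integral_const_mul]
  have h : ∫ s : ℝ, exp (-s^2/2) = Real.sqrt (2*π) := by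
    have := integral_gaussian (1/2 : ℝ)
    rw [show π / (1/2 : ℝ) = 2*π by ring] at this
    rw [← this]
    congr 1 with s
    ring_nf
  rw [h]
  rw [one_div, inv_mul_cancel₀]
  positivity

lemma sqrt_two_pi_sq : (1 / Real.sqrt (2*π)) * (1 / Real.sqrt (2*π)) = 1/(2*π) := by
  rw [div_mul_div_comm, one_mul, mul_self_sqrt (by positivity)]

lemma craig_cos (x : ℝ) (hx : 0 ≤ x) :
    gaussQ x = ∫ θ in Ioo (-(π/2)) (π/2), (1/(2*π)) * exp (-x^2 / (2 * cos θ^2)) := by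
  set f : ℝ → ℝ := fun t => (1 / Real.sqrt (2*π)) * exp (-t^2/2) with hf
  set f₁ : ℝ → ℝ := (Ioi x).indicator f with hf₁
  have hfc : Continuous f := by fun_prop
  have hfnn : ∀ t, 0 ≤ f t := fun t => by positivity
  have hfle : ∀ t, f t ≤ 1 / Real.sqrt (2*π) := by
    intro t
    have : exp (-t^2/2) ≤ 1 := by
      rw [exp_le_one_iff]; nlinarith [sq_nonneg t]
    calc f t ≤ (1 / Real.sqrt (2*π)) * 1 := by
          apply mul_le_mul_of_nonneg_left this (by positivity)
      _ = _ := mul_one _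
  have hf₁le : ∀ t, |f₁ t| ≤ f t := by
    intro t
    rw [hf₁, indicator_apply]
    split_ifs with h
    · rw [abs_of_nonneg (hfnn t)]
    · simpa using hfnn t
  -- product formula
  have step3 : gaussQ x = ∫ p : ℝ × ℝ, f₁ p.1 * f p.2 := by
    rw [Measure.volume_eq_prod, integral_prod_mul]
    rw [hf₁, integral_indicator measurableSet_Ioi, gauss_total, mul_one]
    rfl
  -- polar coordinates
  have step4 : (∫ p : ℝ × ℝ, f₁ p.1 * f p.2)
      = ∫ p in polarCoord.target, p.1 • (f₁ (p.1 * cos p.2) * f (p.1 * sin p.2)) := by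
    rw [← integral_comp_polarCoord_symm (fun p => f₁ p.1 * f p.2)]
    simp only [polarCoord_symm_apply]
  -- key pointwise identity
  have hprod : ∀ ρ θ : ℝ, f (ρ * cos θ) * f (ρ * sin θ) = (1/(2*π)) * exp (-ρ^2/2) := by
    intro ρ θ
    rw [hf]
    simp only
    rw [mul_mul_mul_comm, sqrt_two_pi_sq, ← exp_add]
    congr 1
    have : (ρ * cos θ)^2 + (ρ * sin θ)^2 = ρ^2 := by
      have := sin_sq_add_cos_sq θ; nlinarith
    congr 1
    linarith
  -- measurability of the polar integrand
  have hmeas : AEStronglyMeasurable (fun p : ℝ × ℝ => p.1 • (f₁ (p.1 * cos p.2) * f (p.1 * sin p.2)))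
      ((volume.restrict (Ioi (0:ℝ))).prod (volume.restrict (Ioo (-π) π))) := by
    have h1 : Measurable f₁ := hfc.measurable.indicator measurableSet_Ioi
    have h2 : Measurable (fun p : ℝ × ℝ => p.1 * cos p.2) :=
      measurable_fst.mul (continuous_cos.measurable.comp measurable_snd)
    have h3 : Measurable (fun p : ℝ × ℝ => p.1 * sin p.2) :=
      measurable_fst.mul (continuous_sin.measurable.comp measurable_snd)
    exact (measurable_fst.smul ((h1.comp h2).mul (hfc.measurable.comp h3))).aestronglyMeasurable
  -- integrability
  have hint : Integrable (fun p : ℝ × ℝ => p.1 • (f₁ (p.1 * cos p.2) * f (p.1 * sin p.2)))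
      ((volume.restrict (Ioi (0:ℝ))).prod (volume.restrict (Ioo (-π) π))) := by
    have hdom : Integrable (fun p : ℝ × ℝ => (|p.1| * exp (-p.1^2/2)) * (1 : ℝ))
        ((volume.restrict (Ioi (0:ℝ))).prod (volume.restrict (Ioo (-π) π))) := by
      refine Integrable.mul_prod (f := fun ρ : ℝ => |ρ| * rexp (-ρ^2/2)) (g := fun _ : ℝ => (1:ℝ)) ?_ ?_
      · have h := (integrable_mul_exp_neg_mul_sq (by norm_num : (0:ℝ) < 1/2)).abs
        have : Integrable (fun ρ : ℝ => |ρ| * exp (-ρ^2/2)) := by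
          refine h.congr (Eventually.of_forall fun ρ => ?_)
          simp only [abs_mul, abs_of_nonneg (exp_nonneg _)]
          ring_nf
        exact this.restrict
      · exact (integrableOn_const_iff).mpr (Or.inr measure_Ioo_lt_top)
    refine hdom.mono' hmeas (Eventually.of_forall fun p => ?_)
    have hb : |f₁ (p.1 * cos p.2) * f (p.1 * sin p.2)| ≤ exp (-p.1^2/2) * (1/(2*π)) := by
      rw [abs_mul]
      calc |f₁ (p.1 * cos p.2)| * |f (p.1 * sin p.2)|
          ≤ f (p.1 * cos p.2) * f (p.1 * sin p.2) := by
            apply mul_le_mul (hf₁le _) (le_of_eq (abs_of_nonneg (hfnn _))) (abs_nonneg _) (hfnn _)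
        _ = (1/(2*π)) * exp (-p.1^2/2) := hprod p.1 p.2
        _ = exp (-p.1^2/2) * (1/(2*π)) := mul_comm _ _
    have hnorm : ‖p.1 • (f₁ (p.1 * cos p.2) * f (p.1 * sin p.2))‖
        = |p.1| * |f₁ (p.1 * cos p.2) * f (p.1 * sin p.2)| := by
      simp [abs_mul]
    rw [hnorm, mul_one]
    calc |p.1| * |f₁ (p.1 * cos p.2) * f (p.1 * sin p.2)|
        ≤ |p.1| * (exp (-p.1^2/2) * (1/(2*π))) := by
          apply mul_le_mul_of_nonneg_left hb (abs_nonneg _)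
      _ ≤ |p.1| * exp (-p.1^2/2) := by
          rw [← mul_assoc]
          refine mul_le_of_le_one_right (by positivity) ?_
          rw [div_le_one (by positivity)]
          linarith [pi_gt_three]
  -- iterated integral, θ outside
  have step5 : (∫ p in polarCoord.target, p.1 • (f₁ (p.1 * cos p.2) * f (p.1 * sin p.2)))
      = ∫ θ in Ioo (-π) π, ∫ ρ in Ioi (0:ℝ), ρ * (f₁ (ρ * cos θ) * f (ρ * sin θ)) := by
    rw [polarCoord_target, Measure.volume_eq_prod, ← Measure.prod_restrict]
    exact integral_prod_symm _ hint
  -- inner integral evaluation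
  have step6 : ∀ θ : ℝ, (∫ ρ in Ioi (0:ℝ), ρ * (f₁ (ρ * cos θ) * f (ρ * sin θ)))
      = if 0 < cos θ then (1/(2*π)) * exp (-x^2 / (2 * cos θ^2)) else 0 := by
    intro θ
    by_cases hc : 0 < cos θ
    · rw [if_pos hc]
      have hxc : 0 ≤ x / cos θ := div_nonneg hx hc.le
      have key : ∀ ρ : ℝ, ρ * (f₁ (ρ * cos θ) * f (ρ * sin θ))
          = (Ioi (x / cos θ)).indicator (fun ρ => ρ * (f (ρ * cos θ) * f (ρ * sin θ))) ρ := by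
        intro ρ
        have hiff : ρ * cos θ ∈ Ioi x ↔ ρ ∈ Ioi (x / cos θ) := by
          simp only [mem_Ioi]
          rw [div_lt_iff₀ hc]
        by_cases h : ρ ∈ Ioi (x / cos θ)
        · rw [indicator_of_mem h, hf₁, indicator_of_mem (hiff.mpr h)]
        · rw [indicator_of_notMem h, hf₁,
            indicator_of_notMem (fun hmem => h (hiff.mp hmem))]
          ring
      calc (∫ ρ in Ioi (0:ℝ), ρ * (f₁ (ρ * cos θ) * f (ρ * sin θ)))
          = ∫ ρ in Ioi (0:ℝ),
              (Ioi (x / cos θ)).indicator (fun ρ => ρ * (f (ρ * cos θ) * f (ρ * sin θ))) ρ :=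
            setIntegral_congr_fun measurableSet_Ioi (fun ρ _ => key ρ)
        _ = ∫ ρ in Ioi (0:ℝ) ∩ Ioi (x / cos θ), ρ * (f (ρ * cos θ) * f (ρ * sin θ)) :=
            setIntegral_indicator measurableSet_Ioi
        _ = ∫ ρ in Ioi (x / cos θ), ρ * (f (ρ * cos θ) * f (ρ * sin θ)) := by
            rw [Ioi_inter_Ioi, sup_eq_right.mpr hxc]
        _ = ∫ ρ in Ioi (x / cos θ), (1/(2*π)) * (ρ * exp (-ρ^2/2)) := by
            refine setIntegral_congr_fun measurableSet_Ioi (fun ρ _ => ?_)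
            rw [hprod]
            ring
        _ = (1/(2*π)) * exp (-(x / cos θ)^2/2) := by
            rw [integral_const_mul, radial_int]
        _ = (1/(2*π)) * exp (-x^2 / (2 * cos θ^2)) := by
            congr 1
            rw [div_pow]
            ring
    · rw [if_neg hc]
      push_neg at hc
      have key : ∀ ρ ∈ Ioi (0:ℝ), ρ * (f₁ (ρ * cos θ) * f (ρ * sin θ)) = 0 := by
        intro ρ hρ
        rw [mem_Ioi] at hρ
        have : ρ * cos θ ∉ Ioi x := by
          rw [mem_Ioi, not_lt]
          nlinarith
        rw [hf₁, indicator_of_notMem this]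
        ring
      rw [setIntegral_congr_fun measurableSet_Ioi key, integral_zero]
  -- outer integral: restrict to (-π/2, π/2)
  have step7 : (∫ θ in Ioo (-π) π,
        (if 0 < cos θ then (1/(2*π)) * exp (-x^2 / (2 * cos θ^2)) else 0))
      = ∫ θ in Ioo (-(π/2)) (π/2), (1/(2*π)) * exp (-x^2 / (2 * cos θ^2)) := by
    have hsub : Ioo (-(π/2)) (π/2) ⊆ Ioo (-π) π :=
      Ioo_subset_Ioo (by linarith [pi_pos]) (by linarith [pi_pos])
    have key : ∀ θ ∈ Ioo (-π) π,
        (if 0 < cos θ then (1/(2*π)) * exp (-x^2 / (2 * cos θ^2)) else 0)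
        = (Ioo (-(π/2)) (π/2)).indicator
            (fun θ => (1/(2*π)) * exp (-x^2 / (2 * cos θ^2))) θ := by
      intro θ hθ
      by_cases h : θ ∈ Ioo (-(π/2)) (π/2)
      · rw [indicator_of_mem h, if_pos (cos_pos_of_mem_Ioo h)]
      · rw [indicator_of_notMem h, if_neg]
        rw [mem_Ioo, not_and_or, not_lt, not_lt] at h
        rw [not_lt]
        rcases h with h | h
        · rw [← cos_neg]
          apply cos_nonpos_of_pi_div_two_le_of_le (by linarith)
          rcases hθ with ⟨h1, h2⟩
          linarith
        · apply cos_nonpos_of_pi_div_two_le_of_le h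
          rcases hθ with ⟨h1, h2⟩
          linarith
    rw [setIntegral_congr_fun measurableSet_Ioo key,
      setIntegral_indicator measurableSet_Ioo,
      inter_eq_self_of_subset_right hsub]
  rw [step3, step4, step5, ← step7]
  exact setIntegral_congr_fun measurableSet_Ioo (fun θ _ => step6 θ)


lemma craig_intble (x a b : ℝ) :
    IntervalIntegrable (fun θ : ℝ => exp (-x^2 / (2 * cos θ^2))) volume a b := by
  rw [intervalIntegrable_iff]
  have hmeas : Measurable (fun θ : ℝ => exp (-x^2 / (2 * cos θ^2))) := by
    apply Real.measurable_exp.comp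
    exact (measurable_const.div ((continuous_cos.measurable.pow_const 2).const_mul 2))
  have : IsFiniteMeasure (volume.restrict (Set.uIoc a b)) :=
    by rw [Set.uIoc]; infer_instance
  refine Integrable.mono' (integrable_const 1) hmeas.aestronglyMeasurable
    (Filter.Eventually.of_forall fun θ => ?_)
  rw [Real.norm_eq_abs, abs_of_nonneg (exp_nonneg _), exp_le_one_iff]
  by_cases h : cos θ = 0
  · simp [h]
  · apply div_nonpos_of_nonpos_of_nonneg (by nlinarith [sq_nonneg x])
    positivity

lemma craig_sin (x : ℝ) (hx : 0 ≤ x) :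
    gaussQ x = (1/π) * ∫ θ in (0:ℝ)..(π/2), exp (-x^2 / (2 * sin θ^2)) := by
  have h2 : (π/2 : ℝ) ≤ π/2 := le_refl _
  have hhalf : (0:ℝ) ≤ π/2 := by linarith [pi_pos]
  rw [craig_cos x hx]
  have e1 : (∫ θ in Ioo (-(π/2)) (π/2), (1/(2*π)) * exp (-x^2 / (2 * cos θ^2)))
      = ∫ θ in (-(π/2):ℝ)..(π/2), (1/(2*π)) * exp (-x^2 / (2 * cos θ^2)) := by
    rw [intervalIntegral.integral_of_le (by linarith [pi_pos]), integral_Ioc_eq_integral_Ioo]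
  rw [e1, intervalIntegral.integral_const_mul]
  set g : ℝ → ℝ := fun θ => exp (-x^2 / (2 * cos θ^2)) with hg
  have hsplit : (∫ θ in (-(π/2):ℝ)..(π/2), g θ)
      = (∫ θ in (-(π/2):ℝ)..(0:ℝ), g θ) + ∫ θ in (0:ℝ)..(π/2), g θ :=
    (intervalIntegral.integral_add_adjacent_intervals (craig_intble x _ _)
      (craig_intble x _ _)).symm
  have heven : (∫ θ in (-(π/2):ℝ)..(0:ℝ), g θ) = ∫ θ in (0:ℝ)..(π/2), g θ := by
    have := intervalIntegral.integral_comp_neg (a := (0:ℝ)) (b := π/2) g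
    rw [neg_zero] at this
    rw [← this]
    refine intervalIntegral.integral_congr (fun θ _ => ?_)
    rw [hg]
    simp [cos_neg]
  have hcs : (∫ θ in (0:ℝ)..(π/2), g θ) = ∫ θ in (0:ℝ)..(π/2), exp (-x^2 / (2 * sin θ^2)) := by
    have : (∫ θ in (0:ℝ)..(π/2), exp (-x^2 / (2 * sin θ^2)))
        = ∫ θ in (0:ℝ)..(π/2), g (π/2 - θ) := by
      refine intervalIntegral.integral_congr (fun θ _ => ?_)
      rw [hg]
      simp [cos_pi_div_two_sub]
    rw [this, intervalIntegral.integral_comp_sub_left g (π/2)]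
    norm_num
  rw [hsplit, heven, hcs]
  field_simp
  ring

lemma gauss_mgf_sq (μ : ℝ) (v : NNReal) (hv : v ≠ 0) {a : ℝ} (ha : 0 < a) :
    ∫ r, exp (-r^2/a) ∂(gaussianReal μ v)
      = Real.sqrt (a/(a+2*(v:ℝ))) * exp (-μ^2/(a+2*(v:ℝ))) := by
  have hvpos : (0:ℝ) < (v:ℝ) := by
    have := pos_iff_ne_zero.mpr hv
    exact_mod_cast this
  have hs : (0:ℝ) < a + 2*(v:ℝ) := by linarith
  set A : ℝ := (a + 2*(v:ℝ)) / (2*a*(v:ℝ)) with hA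
  have hApos : 0 < A := by positivity
  set m : ℝ := μ*a/(a+2*(v:ℝ)) with hm
  set K : ℝ := μ^2/(a+2*(v:ℝ)) with hK
  -- reduce to Lebesgue integral against the density
  rw [gaussianReal_of_var_ne_zero _ hv]
  have hpdf_meas : Measurable fun x => (gaussianPDFReal μ v x).toNNReal :=
    (measurable_gaussianPDFReal μ v).real_toNNReal
  have hwd : (volume.withDensity (gaussianPDF μ v))
      = volume.withDensity (fun x => ((gaussianPDFReal μ v x).toNNReal : ENNReal)) := rfl
  rw [hwd, integral_withDensity_eq_integral_smul hpdf_meas]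
  have hsmul : ∀ x : ℝ, (gaussianPDFReal μ v x).toNNReal • exp (-x^2/a)
      = gaussianPDFReal μ v x * exp (-x^2/a) := by
    intro x
    rw [NNReal.smul_def, Real.coe_toNNReal _ (gaussianPDFReal_nonneg μ v x), smul_eq_mul]
  rw [integral_congr_ae (Eventually.of_forall hsmul)]
  -- pointwise rewrite of the integrand
  have hpoint : ∀ x : ℝ, gaussianPDFReal μ v x * exp (-x^2/a)
      = ((√(2 * π * (v:ℝ)))⁻¹ * exp (-K)) * exp (-(A * (x - m)^2)) := by
    intro x
    have hexp : -(x-μ)^2/(2*(v:ℝ)) + -x^2/a = -K + -(A*(x-m)^2) := by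
      rw [hA, hm, hK]
      field_simp
      ring
    rw [gaussianPDFReal, mul_assoc, ← exp_add, hexp, exp_add, ← mul_assoc]
  rw [integral_congr_ae (Eventually.of_forall hpoint), integral_const_mul]
  -- shift and Gaussian integral
  have hshift : (∫ x : ℝ, exp (-(A * (x - m)^2)))
      = ∫ x : ℝ, exp (-(A * x^2)) := by
    exact integral_sub_right_eq_self (fun y => exp (-(A * y^2))) m
  rw [hshift]
  have hgauss : (∫ x : ℝ, exp (-(A * x^2))) = √(π / A) := by
    rw [← integral_gaussian A]
    congr 1 with x
    ring_nf
  rw [hgauss]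
  -- final algebra with square roots
  have hcollect : (√(2 * π * (v:ℝ)))⁻¹ * √(π / A) = √(a/(a+2*(v:ℝ))) := by
    rw [← Real.sqrt_inv, ← Real.sqrt_mul (by positivity)]
    congr 1
    rw [hA]
    field_simp
  rw [mul_comm ((√(2 * π * (v:ℝ)))⁻¹) (exp (-K)), mul_assoc, hcollect, hK, mul_comm]
  rw [neg_div]

/-- The change of variables ϑ = (π/4)φ + π/4 turns (1/π)∫_0^{π/2} g(ϑ)dϑ into
(1/4)∫_{-1}^{1} g((π/4)φ + π/4)dφ for any g integrable on [0, π/2]; in particular the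
unconditional pairwise error probability E[Q(√(R²/(2ς)))] for a real Gaussian R with
mean μ_R and variance σ_R² > 0 equals the corresponding integral over [-1, 1]. -/
theorem upep_change_of_variables
    (μ : ℝ) (v : NNReal) (hv : 0 < v) (ς : ℝ) (hς : 0 < ς) :
    (∀ g : ℝ → ℝ, IntervalIntegrable g volume 0 (π/2) →
      (1/π) * ∫ ϑ in (0:ℝ)..(π/2), g ϑ
        = (1/4) * ∫ φ in (-1:ℝ)..1, g (π/4 * φ + π/4)) ∧
    ∫ r, gaussQ (Real.sqrt (r^2 / (2*ς))) ∂(gaussianReal μ v)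
      = (1/4) * ∫ φ in (-1:ℝ)..1,
          Real.sqrt (2 * ς * Real.sin (π/4 * φ + π/4) ^ 2
              / (2 * ς * Real.sin (π/4 * φ + π/4) ^ 2 + (v : ℝ)))
            * Real.exp (-μ^2 / (4 * ς * Real.sin (π/4 * φ + π/4) ^ 2 + 2 * (v : ℝ))) := by
  have hπ : (0:ℝ) < π := pi_pos
  have part1 : ∀ g : ℝ → ℝ, IntervalIntegrable g volume 0 (π/2) →
      (1/π) * ∫ ϑ in (0:ℝ)..(π/2), g ϑ
        = (1/4) * ∫ φ in (-1:ℝ)..1, g (π/4 * φ + π/4) := by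
    intro g _
    rw [intervalIntegral.integral_comp_mul_add g (by positivity : (π/4:ℝ) ≠ 0) (π/4)]
    rw [show π/4 * (-1) + π/4 = (0:ℝ) by ring, show π/4 * 1 + π/4 = (π/2:ℝ) by ring]
    rw [smul_eq_mul, ← mul_assoc]
    congr 1
    field_simp
  refine ⟨part1, ?_⟩
  have hvpos : (0:ℝ) < (v:ℝ) := by exact_mod_cast hv
  have hvne : v ≠ 0 := hv.ne'
  set h : ℝ → ℝ := fun θ => Real.sqrt (2*ς*sin θ^2/(2*ς*sin θ^2+(v:ℝ)))
      * exp (-μ^2/(4*ς*sin θ^2+2*(v:ℝ))) with hh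
  have hhc : Continuous h := by
    apply Continuous.mul
    · apply Real.continuous_sqrt.comp
      apply Continuous.div (by continuity) (by continuity)
      intro θ
      positivity
    · apply Real.continuous_exp.comp
      apply Continuous.div (by continuity) (by continuity)
      intro θ
      positivity
  have hint_h : IntervalIntegrable h volume 0 (π/2) := hhc.intervalIntegrable _ _
  have step1 : ∀ r : ℝ, gaussQ (Real.sqrt (r^2/(2*ς)))
      = (1/π) * ∫ θ in (0:ℝ)..(π/2), exp (-r^2/(4*ς*sin θ^2)) := by
    intro r
    rw [craig_sin _ (Real.sqrt_nonneg _)]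
    congr 1
    refine intervalIntegral.integral_congr (fun θ _ => ?_)
    rw [Real.sq_sqrt (by positivity)]
    have h4 : (2*ς)*(2*sin θ^2) = 4*ς*sin θ^2 := by ring
    rw [neg_div, neg_div, div_div, h4]
  have hFub : Integrable (Function.uncurry fun (r θ : ℝ) => exp (-r^2/(4*ς*sin θ^2)))
      ((gaussianReal μ v).prod (volume.restrict (Ioc 0 (π/2)))) := by
    have hmeas : Measurable (fun p : ℝ × ℝ => exp (-p.1^2/(4*ς*sin p.2^2))) := by
      apply Real.measurable_exp.comp
      exact ((measurable_fst.pow_const 2).neg).div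
        (((continuous_sin.measurable.comp measurable_snd).pow_const 2).const_mul (4*ς))
    refine (integrable_const (1:ℝ)).mono' hmeas.aestronglyMeasurable
      (Eventually.of_forall fun p => ?_)
    simp only [Function.uncurry]
    rw [Real.norm_eq_abs, abs_of_nonneg (exp_nonneg _), exp_le_one_iff]
    apply div_nonpos_of_nonpos_of_nonneg (by nlinarith [sq_nonneg p.1])
    positivity
  have step5 : ∀ θ ∈ Ioc (0:ℝ) (π/2),
      (∫ r, exp (-r^2/(4*ς*sin θ^2)) ∂(gaussianReal μ v)) = h θ := by
    intro θ hθ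
    have hsθ : 0 < sin θ := sin_pos_of_pos_of_lt_pi hθ.1 (lt_of_le_of_lt hθ.2 (by linarith))
    have ha : 0 < 4*ς*sin θ^2 := by positivity
    rw [gauss_mgf_sq μ v hvne ha, hh]
    congr 2
    have hd1 : (0:ℝ) < 4*ς*sin θ^2 + 2*(v:ℝ) := by positivity
    have hd2 : (0:ℝ) < 2*ς*sin θ^2 + (v:ℝ) := by positivity
    field_simp
    ring
  calc ∫ r, gaussQ (Real.sqrt (r^2 / (2*ς))) ∂(gaussianReal μ v)
      = ∫ r, ((1/π) * ∫ θ in (0:ℝ)..(π/2), exp (-r^2/(4*ς*sin θ^2))) ∂(gaussianReal μ v) := by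
        refine integral_congr_ae (Eventually.of_forall fun r => ?_)
        exact step1 r
    _ = (1/π) * ∫ r, (∫ θ in (0:ℝ)..(π/2), exp (-r^2/(4*ς*sin θ^2))) ∂(gaussianReal μ v) := by
        rw [integral_const_mul]
    _ = (1/π) * ∫ r, (∫ θ in Ioc (0:ℝ) (π/2), exp (-r^2/(4*ς*sin θ^2))) ∂(gaussianReal μ v) := by
        congr 1
        refine integral_congr_ae (Eventually.of_forall fun r => ?_)
        simp only [intervalIntegral.integral_of_le (show (0:ℝ) ≤ π/2 by positivity)]
    _ = (1/π) * ∫ θ in Ioc (0:ℝ) (π/2), (∫ r, exp (-r^2/(4*ς*sin θ^2)) ∂(gaussianReal μ v)) := by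
        rw [integral_integral_swap hFub]
    _ = (1/π) * ∫ θ in Ioc (0:ℝ) (π/2), h θ := by
        rw [setIntegral_congr_fun measurableSet_Ioc step5]
    _ = (1/π) * ∫ θ in (0:ℝ)..(π/2), h θ := by
        rw [intervalIntegral.integral_of_le (by positivity)]
    _ = (1/4) * ∫ φ in (-1:ℝ)..1, h (π/4 * φ + π/4) := part1 h hint_h
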